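/- Let p be a prime and X = {(x,y) ∈ (F̄_p*)² : x + y = 1}, where F̄_p is an algebraic closure of F_p. Then for all T ≥ 1, the number of points (x,y) ∈ X such that (x,y) has order at most T in the group (F̄_p*)² is at most 16·T^{3/2}. -/

import Mathlib

open Polynomial

lemma aux_mono_ne {K : Type*} [Field K] {i j k l : ℕ} (h : (i, j) ≠ (k, l)) :
    (X : K[X]) ^ i * (1 - X) ^ j ≠ X ^ k * (1 - X) ^ l := by
  intro heq
  have hX0 : (X : K[X]) ≠ 0 := X_ne_zero
  have h1X : (1 - X : K[X]) ≠ 0 := by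
    intro h0
    have := congrArg (eval 0) h0
    simp at this
  have hdeg : ∀ m n : ℕ, ((X : K[X]) ^ m * (1 - X) ^ n).natDegree = m + n := by
    intro m n
    rw [natDegree_mul (pow_ne_zero _ hX0) (pow_ne_zero _ h1X), natDegree_pow, natDegree_pow,
      natDegree_X]
    have : (1 - X : K[X]).natDegree = 1 := by
      rw [show (1 - X : K[X]) = -(X - C 1) by simp [neg_sub], natDegree_neg, natDegree_X_sub_C]
    rw [this]; ring
  have hrm : ∀ m n : ℕ, rootMultiplicity 0 ((X : K[X]) ^ m * (1 - X) ^ n) = m := by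
    intro m n
    rw [rootMultiplicity_mul (mul_ne_zero (pow_ne_zero _ hX0) (pow_ne_zero _ h1X))]
    have h1 : rootMultiplicity (0 : K) (X ^ m) = m := by
      have := rootMultiplicity_X_sub_C_pow (0 : K) m
      simpa using this
    have h2 : rootMultiplicity (0 : K) ((1 - X) ^ n) = 0 := by
      rw [rootMultiplicity_eq_zero]
      intro hr
      simp [IsRoot] at hr
    rw [h1, h2]; ring
  have e1 : i + j = k + l := by rw [← hdeg i j, ← hdeg k l, heq]
  have e2 : i = k := by rw [← hrm i j, ← hrm k l, heq]
  exact h (Prod.ext_iff.mpr ⟨e2, by omega⟩)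

lemma aux_tor (p : ℕ) [Fact p.Prime] (x : (AlgebraicClosure (ZMod p))ˣ) : IsOfFinOrder x := by
  set K := AlgebraicClosure (ZMod p)
  have ha : IsIntegral (ZMod p) (x : K) := Algebra.IsIntegral.isIntegral _
  haveI : FiniteDimensional (ZMod p) (IntermediateField.adjoin (ZMod p) {(x : K)}) :=
    IntermediateField.adjoin.finiteDimensional ha
  haveI : Finite (IntermediateField.adjoin (ZMod p) {(x : K)}) :=
    Module.finite_of_finite (ZMod p)
  set F := IntermediateField.adjoin (ZMod p) {(x : K)}
  have hmem : (x : K) ∈ F := IntermediateField.mem_adjoin_simple_self _ _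
  have hne : (⟨(x : K), hmem⟩ : F) ≠ 0 := by
    intro h0
    have : (x : K) = 0 := congrArg Subtype.val h0
    exact x.ne_zero this
  set u : Fˣ := Units.mk0 _ hne
  have hu : IsOfFinOrder u := isOfFinOrder_of_finite u
  obtain ⟨n, hn, hun⟩ := (isOfFinOrder_iff_pow_eq_one).mp hu
  refine (isOfFinOrder_iff_pow_eq_one).mpr ⟨n, hn, ?_⟩
  ext
  have h2 : ((u : F) ^ n : F) = 1 := by
    rw [← Units.val_pow_eq_pow_val, hun, Units.val_one]
  have h3 : ((u : F) : K) ^ n = 1 := by exact_mod_cast congrArg (Subtype.val) h2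
  simpa [show ((u : F) : K) = (x : K) from rfl] using h3

/-- Let `p` be a prime and `X = {(x,y) ∈ (F̄_p^*)² : x + y = 1}`. Then for all `T ≥ 1`,
the number of points of `X` of order at most `T` in the group `(F̄_p^*)²` is at most
`16 · T^(3/2)`. -/
theorem stmt19 (p : ℕ) [Fact p.Prime] (T : ℝ) (hT : 1 ≤ T) :
    (Nat.card {z : (AlgebraicClosure (ZMod p))ˣ × (AlgebraicClosure (ZMod p))ˣ //
        (z.1 : AlgebraicClosure (ZMod p)) + (z.2 : AlgebraicClosure (ZMod p)) = 1 ∧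
        (orderOf z : ℝ) ≤ T} : ℝ)
      ≤ 16 * T ^ (3 / 2 : ℝ) := by
  classical
  set K := AlgebraicClosure (ZMod p) with hKdef
  set M := ⌊Real.sqrt T⌋₊ with hMdef
  set Q : Finset (ℤ × ℤ) :=
    ((Finset.Icc (-(M : ℤ)) (M : ℤ)) ×ˢ (Finset.Icc (-(M : ℤ)) (M : ℤ))).erase (0, 0) with hQdef
  set pol : ℤ × ℤ → K[X] := fun ab =>
    X ^ ab.1.toNat * (1 - X) ^ ab.2.toNat - X ^ (-ab.1).toNat * (1 - X) ^ (-ab.2).toNat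
    with hpoldef
  have hpolne : ∀ ab ∈ Q, pol ab ≠ 0 := by
    rintro ⟨a, b⟩ hab
    have hab0 : ((a, b) : ℤ × ℤ) ≠ (0, 0) := (Finset.mem_erase.mp hab).1
    have hmono : ((a.toNat, b.toNat) : ℕ × ℕ) ≠ ((-a).toNat, (-b).toNat) := by
      intro h
      rw [Prod.ext_iff] at h
      apply hab0
      rw [Prod.ext_iff]
      constructor <;> [skip; skip] <;> simp only [Prod.fst, Prod.snd] at h ⊢ <;> omega
    intro h0
    exact aux_mono_ne hmono (by rwa [sub_eq_zero] at h0)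
  have hcard : ∀ ab ∈ Q, ((pol ab).roots.toFinset).card ≤ 2 * M := by
    rintro ⟨a, b⟩ hab
    have hb := (Finset.mem_erase.mp hab).2
    rw [Finset.mem_product, Finset.mem_Icc, Finset.mem_Icc] at hb
    have hdegmono : ∀ m n : ℕ, ((X : K[X]) ^ m * (1 - X) ^ n).natDegree ≤ m + n := by
      intro m n
      refine natDegree_mul_le.trans (add_le_add ?_ ?_)
      · simpa using natDegree_pow_le (p := (X : K[X])) (n := m)
      · refine (natDegree_pow_le (p := (1 - X : K[X])) (n := n)).trans ?_
        have : (1 - X : K[X]).natDegree = 1 := by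
          rw [show (1 - X : K[X]) = -(X - C 1) by simp [neg_sub], natDegree_neg,
            natDegree_X_sub_C]
        rw [this, mul_one]
    have hdeg : (pol (a, b)).natDegree ≤ 2 * M := by
      refine (natDegree_sub_le _ _).trans ?_
      refine max_le ((hdegmono _ _).trans ?_) ((hdegmono _ _).trans ?_) <;> omega
    calc ((pol (a, b)).roots.toFinset).card ≤ Multiset.card (pol (a, b)).roots :=
          Multiset.toFinset_card_le _
      _ ≤ (pol (a, b)).natDegree := card_roots' _
      _ ≤ 2 * M := hdeg
  set A : Finset K := Q.biUnion (fun ab => (pol ab).roots.toFinset) with hAdef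
  have key : ∀ z : Kˣ × Kˣ, ((z.1 : K) + (z.2 : K) = 1) → ((orderOf z : ℝ) ≤ T) →
      ((z.1 : K) ∈ A) := by
    rintro ⟨x, y⟩ hsum hord
    simp only at hsum hord ⊢
    have hz : IsOfFinOrder ((x, y) : Kˣ × Kˣ) := (aux_tor p x).prod_mk (aux_tor p y)
    set N := orderOf ((x, y) : Kˣ × Kˣ) with hNdef
    have hN : 0 < N := hz.orderOf_pos
    have hzN : ((x, y) : Kˣ × Kˣ) ^ N = 1 := pow_orderOf_eq_one _
    have hxN : (x : K) ^ N = 1 := by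
      have h : x ^ N = 1 := congrArg Prod.fst hzN
      rw [← Units.val_pow_eq_pow_val, h, Units.val_one]
    have hyN : (y : K) ^ N = 1 := by
      have h : y ^ N = 1 := congrArg Prod.snd hzN
      rw [← Units.val_pow_eq_pow_val, h, Units.val_one]
    have hlt : N < (M + 1) * (M + 1) := by
      have h1 : Real.sqrt T < (M : ℝ) + 1 := Nat.lt_floor_add_one _
      have h2 : T < ((M : ℝ) + 1) * ((M : ℝ) + 1) := by
        nlinarith [Real.sq_sqrt (le_trans zero_le_one hT), Real.sqrt_nonneg T]
      have h3 : (N : ℝ) < (((M + 1) * (M + 1) : ℕ) : ℝ) := by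
        push_cast
        exact lt_of_le_of_lt hord h2
      exact_mod_cast h3
    have hmap : ∀ ij : Fin (M + 1) × Fin (M + 1),
        (x : K) ^ (ij.1 : ℕ) * (y : K) ^ (ij.2 : ℕ) ∈ (nthRoots N (1 : K)).toFinset := by
      intro ij
      rw [Multiset.mem_toFinset, mem_nthRoots hN]
      rw [mul_pow, ← pow_mul, ← pow_mul, mul_comm (ij.1 : ℕ) N, mul_comm (ij.2 : ℕ) N,
        pow_mul, pow_mul, hxN, hyN, one_pow, one_pow, one_mul]
    have hcardlt : ((nthRoots N (1 : K)).toFinset).card <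
        (Finset.univ : Finset (Fin (M + 1) × Fin (M + 1))).card := by
      calc ((nthRoots N (1 : K)).toFinset).card ≤ Multiset.card (nthRoots N (1 : K)) :=
            Multiset.toFinset_card_le _
        _ ≤ N := card_nthRoots _ _
        _ < (M + 1) * (M + 1) := hlt
        _ = (Finset.univ : Finset (Fin (M + 1) × Fin (M + 1))).card := by
            simp [Finset.card_univ]
    obtain ⟨ij1, -, ij2, -, hne, heq⟩ :=
      Finset.exists_ne_map_eq_of_card_lt_of_maps_to hcardlt (fun ij _ => hmap ij)
    set a : ℤ := ((ij1.1 : ℕ) : ℤ) - ((ij2.1 : ℕ) : ℤ) with hadef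
    set b : ℤ := ((ij1.2 : ℕ) : ℤ) - ((ij2.2 : ℕ) : ℤ) with hbdef
    have hi1 : (ij1.1 : ℕ) ≤ M := Nat.lt_succ_iff.mp ij1.1.isLt
    have hi2 : (ij2.1 : ℕ) ≤ M := Nat.lt_succ_iff.mp ij2.1.isLt
    have hj1 : (ij1.2 : ℕ) ≤ M := Nat.lt_succ_iff.mp ij1.2.isLt
    have hj2 : (ij2.2 : ℕ) ≤ M := Nat.lt_succ_iff.mp ij2.2.isLt
    have habQ : ((a, b) : ℤ × ℤ) ∈ Q := by
      rw [hQdef, Finset.mem_erase, Finset.mem_product, Finset.mem_Icc, Finset.mem_Icc]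
      refine ⟨?_, ⟨by omega, by omega⟩, by omega, by omega⟩
      intro h
      rw [Prod.ext_iff] at h
      apply hne
      have h1 : (ij1.1 : ℕ) = (ij2.1 : ℕ) := by omega
      have h2 : (ij1.2 : ℕ) = (ij2.2 : ℕ) := by omega
      exact Prod.ext_iff.mpr ⟨Fin.ext h1, Fin.ext h2⟩
    have hxne : (x : K) ≠ 0 := x.ne_zero
    have hyne : (y : K) ≠ 0 := y.ne_zero
    have hyx : (1 : K) - (x : K) = (y : K) := by linear_combination -hsum
    have hka : a.toNat + (ij2.1 : ℕ) = (-a).toNat + (ij1.1 : ℕ) := by omega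
    have hkb : b.toNat + (ij2.2 : ℕ) = (-b).toNat + (ij1.2 : ℕ) := by omega
    have hroot : (pol (a, b)).IsRoot (x : K) := by
      simp only [hpoldef, IsRoot, eval_sub, eval_mul, eval_pow, eval_X, eval_one]
      rw [hyx, sub_eq_zero]
      have h3 : ((x : K) ^ (ij1.1 : ℕ) * (y : K) ^ (ij1.2 : ℕ)) ≠ 0 :=
        mul_ne_zero (pow_ne_zero _ hxne) (pow_ne_zero _ hyne)
      apply mul_right_cancel₀ h3
      calc (x : K) ^ a.toNat * (y : K) ^ b.toNat *
            ((x : K) ^ (ij1.1 : ℕ) * (y : K) ^ (ij1.2 : ℕ))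
          = (x : K) ^ a.toNat * (y : K) ^ b.toNat *
            ((x : K) ^ (ij2.1 : ℕ) * (y : K) ^ (ij2.2 : ℕ)) := by rw [heq]
        _ = (x : K) ^ (a.toNat + (ij2.1 : ℕ)) * (y : K) ^ (b.toNat + (ij2.2 : ℕ)) := by
            rw [pow_add, pow_add]; ring
        _ = (x : K) ^ ((-a).toNat + (ij1.1 : ℕ)) * (y : K) ^ ((-b).toNat + (ij1.2 : ℕ)) := by
            rw [hka, hkb]
        _ = (x : K) ^ (-a).toNat * (y : K) ^ (-b).toNat *
            ((x : K) ^ (ij1.1 : ℕ) * (y : K) ^ (ij1.2 : ℕ)) := by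
            rw [pow_add, pow_add]; ring
    refine Finset.mem_biUnion.mpr ⟨(a, b), habQ, ?_⟩
    rw [Multiset.mem_toFinset, mem_roots (hpolne _ habQ)]
    exact hroot
  -- the injection
  set S := {z : Kˣ × Kˣ // (z.1 : K) + (z.2 : K) = 1 ∧ (orderOf z : ℝ) ≤ T} with hSdef
  have hinj : Function.Injective
      (fun z : S => (⟨(z.val.1 : K), key z.val z.prop.1 z.prop.2⟩ : {u // u ∈ A})) := by
    intro z w h
    have h0 : (z.val.1 : K) = (w.val.1 : K) := congrArg Subtype.val h
    have h1 : z.val.1 = w.val.1 := Units.ext h0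
    have h2 : z.val.2 = w.val.2 := by
      apply Units.ext
      have hz2 := z.prop.1
      have hw2 := w.prop.1
      have : (z.val.2 : K) = 1 - (z.val.1 : K) := by linear_combination hz2
      have hw3 : (w.val.2 : K) = 1 - (w.val.1 : K) := by linear_combination hw2
      rw [this, hw3, h0]
    exact Subtype.ext (Prod.ext h1 h2)
  have hle : Nat.card S ≤ A.card := by
    have := Nat.card_le_card_of_injective _ hinj
    simpa [Nat.card_eq_finsetCard] using this
  have hAcard : A.card ≤ ((2 * M + 1) * (2 * M + 1) - 1) * (2 * M) := by
    have h1 : A.card ≤ Q.card * (2 * M) := Finset.card_biUnion_le_card_mul _ _ _ hcard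
    have h2 : Q.card = (2 * M + 1) * (2 * M + 1) - 1 := by
      have hmem : ((0, 0) : ℤ × ℤ) ∈
          (Finset.Icc (-(M : ℤ)) (M : ℤ)) ×ˢ (Finset.Icc (-(M : ℤ)) (M : ℤ)) := by
        refine Finset.mem_product.mpr ⟨?_, ?_⟩ <;> rw [Finset.mem_Icc] <;>
          exact ⟨by omega, by omega⟩
      rw [hQdef, Finset.card_erase_of_mem hmem, Finset.card_product, Int.card_Icc]
      have he : ((M : ℤ) + 1 - -(M : ℤ)).toNat = 2 * M + 1 := by omega
      rw [he]
    rw [h2] at h1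
    exact h1
  -- final arithmetic
  have hM : (M : ℝ) ≤ Real.sqrt T := Nat.floor_le (Real.sqrt_nonneg T)
  have hs1 : 1 ≤ Real.sqrt T := Real.one_le_sqrt.mpr hT
  have hrp : T ^ (3 / 2 : ℝ) = Real.sqrt T ^ (3 : ℕ) := by
    rw [Real.sqrt_eq_rpow, ← Real.rpow_natCast (T ^ (1 / 2 : ℝ)) 3,
      ← Real.rpow_mul (by linarith : (0 : ℝ) ≤ T)]
    norm_num
  have hnat : ((2 * M + 1) * (2 * M + 1) - 1) * (2 * M) = 8 * M ^ 3 + 8 * M ^ 2 := by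
    have h : (2 * M + 1) * (2 * M + 1) = 4 * M ^ 2 + 4 * M + 1 := by ring
    rw [h]
    have h2 : 4 * M ^ 2 + 4 * M + 1 - 1 = 4 * M ^ 2 + 4 * M := by omega
    rw [h2]
    ring
  have hfinal : (Nat.card S : ℝ) ≤ 16 * T ^ (3 / 2 : ℝ) := by
    have hle2 : (Nat.card S : ℝ) ≤ ((8 * M ^ 3 + 8 * M ^ 2 : ℕ) : ℝ) := by
      exact_mod_cast hle.trans (hAcard.trans_eq hnat)
    refine hle2.trans ?_
    rw [hrp]
    push_cast
    have h3 : (M : ℝ) ^ 3 ≤ Real.sqrt T ^ 3 := by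
      apply pow_le_pow_left₀ (Nat.cast_nonneg M) hM
    have h2 : (M : ℝ) ^ 2 ≤ Real.sqrt T ^ 2 :=
      pow_le_pow_left₀ (Nat.cast_nonneg M) hM 2
    nlinarith [Real.sqrt_nonneg T]
  exact hfinal
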